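/- Bound on the decryption error term: with w = m·⌊q/2⌋ + x − eᵀ·y as above, if |x| ≤ B_x, ‖e‖ ≤ B_e and ‖y‖ ≤ B_y with B_x + B_e·B_y < ⌊q/4⌋, then the threshold decoder correctly recovers the bit m. -/
import Mathlib


open scoped RealInnerProductSpace

/-- Bound on the decryption error term: if w = b·⌊q/2⌋ + x − ⟨e,y⟩ with
|x| ≤ Bx, ‖e‖ ≤ Be, ‖y‖ ≤ By and Bx + Be·By < ⌊q/4⌋, then the threshold
decoder correctly recovers the bit b. -/
theorem decryption_error_bound_correct
    (q : ℕ) (hq : 4 < q) (m : ℕ)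
    (e y : EuclideanSpace ℝ (Fin (3 * m)))
    (x Bx Be By : ℝ)
    (hx : |x| ≤ Bx) (he : ‖e‖ ≤ Be) (hy : ‖y‖ ≤ By)
    (hB : Bx + Be * By < ((q / 4 : ℕ) : ℝ))
    (b : ℝ) (hb : b = 0 ∨ b = 1)
    (w : ℝ) (hw : w = b * ((q / 2 : ℕ) : ℝ) + x - ⟪e, y⟫) :
    (if |w - ((q / 2 : ℕ) : ℝ)| < ((q / 4 : ℕ) : ℝ) then (1 : ℝ) else 0) = b := by
  have hinner : |⟪e, y⟫| ≤ Be * By := by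
    calc |⟪e, y⟫| ≤ ‖e‖ * ‖y‖ := abs_real_inner_le_norm e y
    _ ≤ Be * By := by
        apply mul_le_mul he hy (norm_nonneg _) ((norm_nonneg e).trans he)
  have herr : |x - ⟪e, y⟫| < ((q / 4 : ℕ) : ℝ) := by
    calc |x - ⟪e, y⟫| ≤ |x| + |⟪e, y⟫| := abs_sub _ _
    _ ≤ Bx + Be * By := add_le_add hx hinner
    _ < _ := hB
  have h24 : 2 * (q / 4 : ℕ) ≤ q / 2 := by omega
  have h24' : 2 * ((q / 4 : ℕ) : ℝ) ≤ ((q / 2 : ℕ) : ℝ) := by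
    exact_mod_cast h24
  rcases hb with rfl | rfl
  · rw [if_neg]
    rw [hw]
    rw [abs_sub_lt_iff] at herr ⊢
    push_neg
    intro h
    simp only [zero_mul, zero_add] at h ⊢
    nlinarith [herr.1, herr.2]
  · rw [if_pos]
    rw [hw]
    have : (1:ℝ) * ((q / 2 : ℕ) : ℝ) + x - ⟪e, y⟫ - ((q / 2 : ℕ) : ℝ) = x - ⟪e, y⟫ := by ring
    rw [this]; exact herr
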